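/- arXiv:0809.0502 — 4 statements merged into one kernel-verified Lean document; each statement's English description precedes it below -/
import Mathlib

section
/- Every c_i (2 ≤ i ≤ p) is invariant, i.e. η_R(c_i) = c_i, and the set of invariant elements {g ∈ ℚ[a_1,…,a_p] : η_R(g) = g} is exactly the ℚ-subalgebra of ℚ[a_1,…,a_p] generated by c_2, c_3, …, c_p. -/
/-!
Fix a prime `p`.  `Apoly p = ℚ[a_1,…,a_p]` (the variable `⟨i-1⟩ : Fin p` stands for `a_i`),
`Γ = (Apoly p)[r]`, and `etaR` is the unique ℚ-algebra map with
`η_R(a_i) = ∑_{j=0}^{i} C(p-j, i-j) a_j r^{i-j}` (with `a_0 = 1`).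
`cgen p i` is the element `c_i = ∑_{j=0}^{i} C(p-j,i-j) (-1)^j a_j a_1^{i-j} p^j`.
-/

/-- The polynomial ring `ℚ[a_1,…,a_p]`. -/
abbrev Apoly (p : ℕ) : Type := MvPolynomial (Fin p) ℚ

/-- `av p j` is the generator `a_j`, with the convention `a_0 = 1`. -/
noncomputable def av (p : ℕ) (j : ℕ) : Apoly p :=
  if j = 0 then 1 else if h : 1 ≤ j ∧ j ≤ p then MvPolynomial.X ⟨j - 1, by omega⟩ else 0

/-- The right unit `η_R : ℚ[a_1,…,a_p] → ℚ[a_1,…,a_p][r]`, determined by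
`η_R(a_i) = ∑_{j=0}^{i} C(p-j, i-j)·a_j·r^{i-j}` (here `a_{k+1}` is the variable `k : Fin p`). -/
noncomputable def etaR (p : ℕ) : Apoly p →ₐ[ℚ] Polynomial (Apoly p) :=
  MvPolynomial.aeval (fun k : Fin p =>
    ∑ j ∈ Finset.range (k.1 + 2),
      (Nat.choose (p - j) (k.1 + 1 - j) : Polynomial (Apoly p)) *
        Polynomial.C (av p j) * Polynomial.X ^ (k.1 + 1 - j))

/-- The invariant elements `c_i = ∑_{j=0}^{i} C(p-j,i-j)·(-1)^j·a_j·a_1^{i-j}·p^j`. -/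
noncomputable def cgen (p i : ℕ) : Apoly p :=
  ∑ j ∈ Finset.range (i + 1),
    (Nat.choose (p - j) (i - j) : Apoly p) * (-1 : Apoly p) ^ j * av p j *
      (av p 1) ^ (i - j) * (p : Apoly p) ^ j

open Polynomial Finset

namespace InvAux

lemma av_zero (p : ℕ) : av p 0 = 1 := rfl

lemma etaR_av (p : ℕ) (i : ℕ) (hi : i ≤ p) :
    etaR p (av p i) = ∑ j ∈ Finset.range (i+1),
      (Nat.choose (p-j) (i-j) : Polynomial (Apoly p)) * Polynomial.C (av p j) *
        Polynomial.X ^ (i-j) := by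
  rcases Nat.eq_zero_or_pos i with h0 | h1
  · subst h0; simp [av_zero]
  · have hav : av p i = MvPolynomial.X (⟨i - 1, by omega⟩ : Fin p) := by
      simp only [av]
      rw [if_neg (by omega), dif_pos ⟨h1, hi⟩]
    rw [hav]
    show MvPolynomial.aeval _ (MvPolynomial.X _) = _
    rw [MvPolynomial.aeval_X]
    have h2 : i - 1 + 1 = i := by omega
    have h3 : i - 1 + 2 = i + 1 := by omega
    simp only [h2, h3]

lemma etaR_one (p : ℕ) (hp : 1 ≤ p) : etaR p (av p 1) =
    (p : Polynomial (Apoly p)) * Polynomial.X + Polynomial.C (av p 1) := by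
  rw [etaR_av p 1 hp]
  rw [Finset.sum_range_succ, Finset.sum_range_succ, Finset.sum_range_zero]
  simp [av_zero, Nat.choose_one_right]

lemma etaR_C (p : ℕ) (x : ℚ) :
    etaR p (MvPolynomial.C x) = Polynomial.C (MvPolynomial.C x) := by
  have h := (etaR p).commutes x
  have h2 : (algebraMap ℚ (Polynomial (Apoly p))) x
      = Polynomial.C (MvPolynomial.C x) := by
    rw [Polynomial.algebraMap_apply]
    norm_cast
  rw [← h2]; exact h

lemma triangle {M : Type*} [AddCommMonoid M] (n : ℕ) (T : ℕ → ℕ → M) :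
    ∑ i ∈ range (n+1), ∑ j ∈ range (i+1), T i j
      = ∑ j ∈ range (n+1), ∑ k ∈ range (n+1-j), T (j+k) j := by
  have h := Finset.sum_Ico_Ico_comm 0 (n+1) (fun j i => T i j)
  simp only [Finset.range_eq_Ico]
  rw [← h]
  refine Finset.sum_congr rfl fun j hj => ?_
  rw [Finset.sum_Ico_eq_sum_range, Finset.range_eq_Ico]

lemma key {R : Type*} [CommRing R] (n : ℕ) (b : ℕ → R) (s u : R) :
    (∑ j ∈ range (n+1), C (b j) * X^(n-j)).comp (C s * X + C u)
      = ∑ i ∈ range (n+1),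
          C (∑ j ∈ range (i+1), (Nat.choose (n-j) (i-j) : R) * b j * u^(i-j) * s^(n-i))
            * X^(n-i) := by
  have hrhs : ∑ i ∈ range (n+1),
      C (∑ j ∈ range (i+1), (Nat.choose (n-j) (i-j) : R) * b j * u^(i-j) * s^(n-i)) * X^(n-i)
      = ∑ i ∈ range (n+1), ∑ j ∈ range (i+1),
          (Nat.choose (n-j) (i-j) : R[X]) * C (b j) * C u^(i-j) * C s^(n-i) * X^(n-i) := by
    refine Finset.sum_congr rfl fun i hi => ?_
    rw [map_sum, Finset.sum_mul]
    refine Finset.sum_congr rfl fun j hj => ?_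
    simp only [map_mul, map_pow, map_natCast]
  rw [hrhs, triangle]
  simp only [Nat.add_sub_cancel_left]
  simp only [Polynomial.comp, Polynomial.eval₂_finset_sum, eval₂_mul, eval₂_C, eval₂_X_pow]
  refine Finset.sum_congr rfl fun j hj => ?_
  have hjn : j ≤ n := by simpa [Nat.lt_succ_iff] using hj
  rw [add_pow, ← Finset.sum_range_reflect]
  have hr : n + 1 - j = n - j + 1 := by omega
  rw [hr, Finset.mul_sum]
  refine Finset.sum_congr rfl fun k hk => ?_
  have hkn : k ≤ n - j := by simpa [Nat.lt_succ_iff] using hk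
  have h1 : n - j + 1 - 1 - k = n - j - k := by omega
  have h2 : n - j - (n - j - k) = k := by omega
  have h4 : n - (j + k) = n - j - k := by omega
  rw [h1, h2, h4, Nat.choose_symm hkn, mul_pow]
  ring

lemma map_CX {R S : Type*} [CommRing R] [CommRing S] (f : R →+* S) (n : ℕ) (b : ℕ → R) :
    Polynomial.map f (∑ j ∈ range (n+1), C (b j) * X^(n-j))
      = ∑ j ∈ range (n+1), C (f (b j)) * X^(n-j) := by
  rw [Polynomial.map_sum]
  refine Finset.sum_congr rfl fun j hj => ?_
  rw [Polynomial.map_mul, Polynomial.map_C, Polynomial.map_pow, Polynomial.map_X]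

lemma ext_coeff {R : Type*} [CommRing R] (n : ℕ) (b c : ℕ → R)
    (h : ∑ i ∈ range (n+1), C (b i) * X^(n-i) = ∑ i ∈ range (n+1), C (c i) * X^(n-i))
    (i : ℕ) (hi : i ≤ n) : b i = c i := by
  have h2 := congrArg (fun q => Polynomial.coeff q (n-i)) h
  simp only [Polynomial.finset_sum_coeff, Polynomial.coeff_C_mul, Polynomial.coeff_X_pow] at h2
  rw [Finset.sum_eq_single i, Finset.sum_eq_single i] at h2
  · simpa using h2
  · intro j hj hne
    have : ¬ (n - i = n - j) := by simp only [Finset.mem_range] at hj; omega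
    simp [this]
  · intro hmem; exact absurd (Finset.mem_range.2 (by omega)) hmem
  · intro j hj hne
    have : ¬ (n - i = n - j) := by simp only [Finset.mem_range] at hj; omega
    simp [this]
  · intro hmem; exact absurd (Finset.mem_range.2 (by omega)) hmem

variable (p : ℕ)

noncomputable def qA : Apoly p := MvPolynomial.C (-(p:ℚ)⁻¹)

noncomputable def uA : Apoly p := qA p * av p 1

lemma cgen_eq (hp : (p:ℚ) ≠ 0) (i : ℕ) (hi : i ≤ p) :
    cgen p i = MvPolynomial.C ((-(p:ℚ))^p) *
      ∑ j ∈ range (i+1), (Nat.choose (p-j) (i-j) : Apoly p) * av p j *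
        (uA p)^(i-j) * (qA p)^(p-i) := by
  rw [Finset.mul_sum, cgen]
  refine Finset.sum_congr rfl fun j hj => ?_
  have hji : j ≤ i := by simpa [Nat.lt_succ_iff] using hj
  have h1 : (-(p:ℚ)) * (-(p:ℚ)⁻¹) = 1 := by field_simp
  have hsplit : (-(p:ℚ))^p = (-(p:ℚ))^j * ((-(p:ℚ))^(i-j) * (-(p:ℚ))^(p-i)) := by
    rw [← pow_add, ← pow_add]; congr 1; omega
  have hq : ((-(p:ℚ))^p) * ((-(p:ℚ)⁻¹))^(i-j) * ((-(p:ℚ)⁻¹))^(p-i) = (-1)^j * (p:ℚ)^j := by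
    have h5 : ((-(p:ℚ))^p) * ((-(p:ℚ)⁻¹))^(i-j) * ((-(p:ℚ)⁻¹))^(p-i)
        = (-(p:ℚ))^j * (((-(p:ℚ)) * (-(p:ℚ)⁻¹))^(i-j) * ((-(p:ℚ)) * (-(p:ℚ)⁻¹))^(p-i)) := by
      rw [mul_pow, mul_pow, hsplit]; ring
    rw [h5, h1, one_pow, one_pow, neg_pow]; ring
  have hC : MvPolynomial.C ((-(p:ℚ))^p) * (qA p)^(i-j) * (qA p)^(p-i)
      = (-1:Apoly p)^j * (p:Apoly p)^j := by
    rw [qA, ← map_pow, ← map_pow, ← map_mul, ← map_mul, hq]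
    simp only [map_mul, map_pow, map_natCast, map_neg, map_one]
  rw [uA, mul_pow]
  linear_combination (-((Nat.choose (p-j) (i-j) : Apoly p) * av p j * (av p 1)^(i-j))) * hC

lemma etaR_cgen (hp : p.Prime) (i : ℕ) (hi : i ≤ p) :
    etaR p (cgen p i) = Polynomial.C (cgen p i) := by
  have hp0 : (p:ℚ) ≠ 0 := Nat.cast_ne_zero.2 hp.ne_zero
  have hp1 : 1 ≤ p := hp.one_lt.le
  set FA : Polynomial (Apoly p) := ∑ j ∈ range (p+1), C (av p j) * X^(p-j) with hFA
  set w : Polynomial (Apoly p) := C (qA p) * X + C (uA p) with hw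
  have h1 : (etaR p) (qA p) = Polynomial.C (qA p) := by rw [qA]; exact etaR_C p _
  have h2 : (etaR p) (uA p) = -Polynomial.X + Polynomial.C (uA p) := by
    rw [uA, map_mul, h1, etaR_one p hp1]
    have hqp : Polynomial.C (qA p) * ((p : Polynomial (Apoly p)))
        = Polynomial.C (-1 : Apoly p) := by
      rw [qA, (map_natCast (Polynomial.C : Apoly p →+* Polynomial (Apoly p)) p).symm, ← map_mul]
      congr 1
      rw [(map_natCast (MvPolynomial.C : ℚ →+* Apoly p) p).symm, ← map_mul]
      congr 1
      field_simp
      simp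
    calc Polynomial.C (qA p) * ((p : Polynomial (Apoly p)) * Polynomial.X + Polynomial.C (av p 1))
        = (Polynomial.C (qA p) * (p : Polynomial (Apoly p))) * Polynomial.X
          + Polynomial.C (qA p) * Polynomial.C (av p 1) := by ring
      _ = - Polynomial.X + Polynomial.C (qA p * av p 1) := by
          rw [hqp, ← map_mul, map_neg, map_one]; ring
  have hmapFA : FA.map (etaR p).toRingHom
      = (FA.map (Polynomial.C : Apoly p →+* Polynomial (Apoly p))).comp
          (Polynomial.X + Polynomial.C Polynomial.X) := by
    rw [hFA, map_CX, map_CX]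
    have hone : (Polynomial.X + Polynomial.C (Polynomial.X : Polynomial (Apoly p)))
        = Polynomial.C (1 : Polynomial (Apoly p)) * Polynomial.X
          + Polynomial.C (Polynomial.X : Polynomial (Apoly p)) := by
      rw [map_one, one_mul]
    rw [hone, key]
    refine Finset.sum_congr rfl fun i hi => ?_
    have h3 : (etaR p) (av p i) = ∑ j ∈ range (i+1),
        (Nat.choose (p-j) (i-j) : Polynomial (Apoly p)) * Polynomial.C (av p j) *
          Polynomial.X ^ (i-j) * (1 : Polynomial (Apoly p))^(p-i) := by
      rw [etaR_av p i (by simpa [Nat.lt_succ_iff] using hi)]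
      exact Finset.sum_congr rfl fun j hj => by rw [one_pow, mul_one]
    show Polynomial.C ((etaR p) (av p i)) * X ^ (p - i) = _
    rw [h3]
  have heq : (FA.comp w).map (etaR p).toRingHom
      = (FA.comp w).map (Polynomial.C : Apoly p →+* Polynomial (Apoly p)) := by
    rw [Polynomial.map_comp, Polynomial.map_comp, hmapFA, Polynomial.comp_assoc]
    congr 1
    rw [hw]
    simp only [Polynomial.map_add, Polynomial.map_mul, Polynomial.map_C, Polynomial.map_X]
    simp only [AlgHom.toRingHom_eq_coe, RingHom.coe_coe]
    rw [h1, h2]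
    rw [Polynomial.add_comp, Polynomial.X_comp, Polynomial.C_comp]
    rw [map_add, map_neg]
    ring
  set K : ℕ → Apoly p := fun i => ∑ j ∈ range (i+1),
      (Nat.choose (p-j) (i-j) : Apoly p) * av p j * (uA p)^(i-j) * (qA p)^(p-i) with hK
  have hcompw : FA.comp w = ∑ i ∈ range (p+1), C (K i) * X^(p-i) := by
    rw [hFA, hw, key]
  have hEK : (etaR p) (K i) = Polynomial.C (K i) := by
    have hh := heq
    rw [hcompw, map_CX, map_CX] at hh
    have := ext_coeff p _ _ hh i hi
    simpa using this
  rw [cgen_eq p hp0 i hi, map_mul, map_mul, etaR_C p, hEK]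

end InvAux

namespace InvAux2
open InvAux

lemma cgen_one (p : ℕ) (hp : 1 ≤ p) : cgen p 1 = 0 := by
  rw [cgen, Finset.sum_range_succ, Finset.sum_range_succ, Finset.sum_range_zero]
  simp [av_zero, Nat.choose_one_right]
  ring

lemma sigma_av (p : ℕ) (hp : (p:ℚ) ≠ 0) (i : ℕ) (hi : i ≤ p) :
    Polynomial.aeval (uA p) (etaR p (av p i))
      = MvPolynomial.C ((-(p:ℚ)⁻¹)^i) * cgen p i := by
  rw [etaR_av p i hi, map_sum, cgen, Finset.mul_sum]
  refine Finset.sum_congr rfl fun j hj => ?_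
  have hji : j ≤ i := by simpa [Nat.lt_succ_iff] using hj
  have h1 : (-(p:ℚ)⁻¹) * (-(p:ℚ)) = 1 := by field_simp
  have hscal : ((-(p:ℚ)⁻¹))^(i-j) = (-(p:ℚ)⁻¹)^i * ((-1)^j * (p:ℚ)^j) := by
    have hsplit : (-(p:ℚ)⁻¹)^i = (-(p:ℚ)⁻¹)^(i-j) * (-(p:ℚ)⁻¹)^j := by
      rw [← pow_add]; congr 1; omega
    have : (-(p:ℚ)⁻¹)^j * ((-1)^j * (p:ℚ)^j) = ((-(p:ℚ)⁻¹) * (-(p:ℚ)))^j := by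
      rw [mul_pow]; ring_nf
    rw [hsplit, mul_assoc, this, h1, one_pow, mul_one]
  have hC : (MvPolynomial.C (-(p:ℚ)⁻¹) : Apoly p)^(i-j)
      = (MvPolynomial.C (-(p:ℚ)⁻¹) : Apoly p)^i * ((-1:Apoly p)^j * (p:Apoly p)^j) := by
    rw [← map_pow, ← map_pow, hscal]
    simp only [map_mul, map_pow, map_natCast, map_neg, map_one]
  simp only [map_mul, map_pow, map_natCast, Polynomial.aeval_X, Polynomial.aeval_C]
  rw [show (algebraMap (Apoly p) (Apoly p)) (av p j) = av p j from rfl]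
  rw [uA, qA, mul_pow]
  linear_combination ((Nat.choose (p-j) (i-j) : Apoly p) * av p j * (av p 1)^(i-j)) * hC

end InvAux2


/-- Every `c_i` (`2 ≤ i ≤ p`) is invariant, and the invariants are exactly the
ℚ-subalgebra generated by `c_2, …, c_p`. -/
theorem invariants_eq_adjoin_c (p : ℕ) (hp : p.Prime) :
    (∀ i : ℕ, 2 ≤ i → i ≤ p → etaR p (cgen p i) = Polynomial.C (cgen p i)) ∧
    {g : Apoly p | etaR p g = Polynomial.C g} =
      ↑(Algebra.adjoin ℚ {x : Apoly p | ∃ i : ℕ, 2 ≤ i ∧ i ≤ p ∧ x = cgen p i}) := by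
  have hp0 : (p:ℚ) ≠ 0 := Nat.cast_ne_zero.2 hp.ne_zero
  have hp1 : 1 ≤ p := hp.one_lt.le
  refine ⟨fun i _ hip => InvAux.etaR_cgen p hp i hip, ?_⟩
  set S : Set (Apoly p) := {x : Apoly p | ∃ i : ℕ, 2 ≤ i ∧ i ≤ p ∧ x = cgen p i} with hS
  apply Set.Subset.antisymm
  · -- invariants ⊆ adjoin
    intro g hg
    have hg' : etaR p g = Polynomial.C g := hg
    have hmem : ∀ g : Apoly p,
        Polynomial.aeval (InvAux.uA p) (etaR p g) ∈ Algebra.adjoin ℚ S := by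
      intro g
      induction g using MvPolynomial.induction_on with
      | C q =>
          rw [InvAux.etaR_C, Polynomial.aeval_C]
          exact Subalgebra.algebraMap_mem _ _
      | add f g hf hg => rw [map_add, map_add]; exact add_mem hf hg
      | mul_X f k hf =>
          rw [map_mul, map_mul]
          refine mul_mem hf ?_
          have hXk : MvPolynomial.X k = av p (k.1+1) := by
            simp only [av]
            rw [if_neg (by omega), dif_pos ⟨by omega, by omega⟩]
            congr 1
          rw [hXk, InvAux2.sigma_av p hp0 (k.1+1) (by omega)]
          rcases Nat.eq_zero_or_pos k.1 with h0 | h1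
      -- k.1 = 0 : cgen p 1 = 0
          · rw [h0, InvAux2.cgen_one p hp1, mul_zero]
            exact zero_mem _
          · refine mul_mem ?_ (Algebra.subset_adjoin ⟨k.1+1, by omega, by omega, rfl⟩)
            exact Subalgebra.algebraMap_mem _ _
    have h2 := hmem g
    rw [hg', Polynomial.aeval_C] at h2
    exact h2
  · -- adjoin ⊆ invariants
    intro g hg
    have hle : Algebra.adjoin ℚ S ≤ AlgHom.equalizer (etaR p)
        (IsScalarTower.toAlgHom ℚ (Apoly p) (Polynomial (Apoly p))) := by
      apply Algebra.adjoin_le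
      rintro x ⟨i, h2, hip, rfl⟩
      show etaR p (cgen p i) = IsScalarTower.toAlgHom ℚ (Apoly p) (Polynomial (Apoly p)) (cgen p i)
      rw [InvAux.etaR_cgen p hp i hip]
      rfl
    exact hle hg
end

section
/- The elements c_2, c_3, …, c_p are algebraically independent over ℚ; hence the ring of invariants {g ∈ ℚ[a_1,…,a_p] : η_R(g) = g} is a polynomial ℚ-algebra on the p−1 generators c_2, …, c_p. -/
open Finset Polynomial

/-- The core binomial identity: trinomial revision plus the binomial theorem. -/
lemma key_sum {R : Type*} [CommRing R] {p i k : ℕ} (hk : k ≤ i) (hip : i ≤ p) (t u : R) :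
    ∑ d ∈ range (i - k + 1),
      ((p - (k + d)).choose (i - (k + d)) : R) * ((p - k).choose d : R) * t ^ d * u ^ (i - (k + d))
    = ((p - k).choose (i - k) : R) * (t + u) ^ (i - k) := by
  rw [add_pow, mul_sum]
  refine Finset.sum_congr rfl fun d hd => ?_
  rw [Finset.mem_range] at hd
  have hd' : d ≤ i - k := by omega
  have hkey : (p - k).choose (i - k) * (i - k).choose d
      = (p - k).choose d * ((p - k) - d).choose ((i - k) - d) :=
    Nat.choose_mul hd'
  have h1 : (p - k) - d = p - (k + d) := by omega
  have h2 : (i - k) - d = i - (k + d) := by omega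
  rw [h1, h2] at hkey
  have : ((p - (k + d)).choose (i - (k + d)) : R) * ((p - k).choose d : R)
      = ((p - k).choose (i - k) : R) * ((i - k).choose d : R) := by
    rw [← Nat.cast_mul, ← Nat.cast_mul, mul_comm ((p - (k+d)).choose _), hkey]
  rw [h2]
  linear_combination (t ^ d * u ^ (i - (k + d))) * this

lemma etaR_av (p : ℕ) {i : ℕ} (hip : i ≤ p) :
    etaR p (av p i) = ∑ j ∈ range (i + 1),
      (Nat.choose (p - j) (i - j) : Polynomial (Apoly p)) * Polynomial.C (av p j) *
        Polynomial.X ^ (i - j) := by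
  rcases Nat.eq_zero_or_pos i with hi | hi
  · subst hi
    simp [av]
  · have h1 : av p i = MvPolynomial.X (⟨i - 1, by omega⟩ : Fin p) := by
      rw [av, if_neg (by omega), dif_pos ⟨hi, hip⟩]
    rw [h1, etaR, MvPolynomial.aeval_X]
    have h2 : (⟨i - 1, by omega⟩ : Fin p).1 + 1 = i := by simp; omega
    rw [h2]
    have h3 : (⟨i - 1, by omega⟩ : Fin p).1 + 2 = i + 1 := by simp; omega
    rw [h3]

/-- The element `-a_1/p`. -/
noncomputable def sElt (p : ℕ) : Apoly p := MvPolynomial.C (-(p : ℚ)⁻¹) * av p 1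

/-- The retraction `σ : A → A`, evaluation of `η_R` at `r = -a_1/p`. -/
noncomputable def sig (p : ℕ) : Apoly p →ₐ[ℚ] Apoly p :=
  ((Polynomial.aeval (sElt p)).restrictScalars ℚ).comp (etaR p)

lemma sig_av (p : ℕ) {i : ℕ} (hip : i ≤ p) :
    sig p (av p i) = ∑ j ∈ range (i + 1),
      (Nat.choose (p - j) (i - j) : Apoly p) * av p j * (sElt p) ^ (i - j) := by
  rw [sig, AlgHom.comp_apply, AlgHom.restrictScalars_apply, etaR_av p hip, map_sum]
  refine Finset.sum_congr rfl fun j hj => ?_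
  simp [Polynomial.aeval_C]

lemma etaR_sElt (p : ℕ) (hp : 1 ≤ p) :
    etaR p (sElt p) = Polynomial.C (sElt p) - Polynomial.X := by
  have hpq : (p : ℚ) ≠ 0 := Nat.cast_ne_zero.mpr (by omega)
  have h1 : etaR p (av p 1) = (p : Polynomial (Apoly p)) * Polynomial.X + Polynomial.C (av p 1) := by
    rw [etaR_av p hp, Finset.sum_range_succ, Finset.sum_range_one]
    simp [av, Nat.choose_one_right]
  have h2 : etaR p (MvPolynomial.C (-(p:ℚ)⁻¹)) = Polynomial.C (MvPolynomial.C (-(p:ℚ)⁻¹)) := by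
    simpa [MvPolynomial.algebraMap_eq, Polynomial.algebraMap_apply] using (etaR p).commutes (-(p:ℚ)⁻¹)
  rw [sElt, map_mul, h1, h2, map_mul]
  have key : (Polynomial.C (MvPolynomial.C (-(p:ℚ)⁻¹)) : Polynomial (Apoly p)) *
      (p : Polynomial (Apoly p)) = -1 := by
    have hcast : ((p : Polynomial (Apoly p))) = Polynomial.C (MvPolynomial.C (p:ℚ)) := by
      simp [map_natCast]
    rw [hcast, ← map_mul, ← map_mul, show (-(p:ℚ)⁻¹) * (p:ℚ) = -1 by field_simp]
    simp
  linear_combination Polynomial.X * key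

lemma double_sum {R : Type*} [CommRing R] (p i : ℕ) (hip : i ≤ p) (a : ℕ → R) (t u : R) :
    ∑ j ∈ range (i + 1), ((p - j).choose (i - j) : R) *
        (∑ m ∈ range (j + 1), ((p - m).choose (j - m) : R) * a m * t ^ (j - m)) * u ^ (i - j)
    = ∑ m ∈ range (i + 1), ((p - m).choose (i - m) : R) * a m * (t + u) ^ (i - m) := by
  calc ∑ j ∈ range (i + 1), ((p - j).choose (i - j) : R) *
        (∑ m ∈ range (j + 1), ((p - m).choose (j - m) : R) * a m * t ^ (j - m)) * u ^ (i - j)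
      = ∑ j ∈ range (i + 1), ∑ m ∈ range (j + 1),
          ((p - j).choose (i - j) : R) * (((p - m).choose (j - m) : R) * a m * t ^ (j - m)) *
            u ^ (i - j) := by
        refine Finset.sum_congr rfl fun j _ => ?_
        rw [Finset.mul_sum, Finset.sum_mul]
    _ = ∑ m ∈ range (i + 1), ∑ j ∈ Finset.Icc m i,
          ((p - j).choose (i - j) : R) * (((p - m).choose (j - m) : R) * a m * t ^ (j - m)) *
            u ^ (i - j) :=
        Finset.sum_comm' (fun j m => by
          simp only [Finset.mem_range, Finset.mem_Icc]; omega)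
    _ = ∑ m ∈ range (i + 1), ((p - m).choose (i - m) : R) * a m * (t + u) ^ (i - m) := by
        refine Finset.sum_congr rfl fun m hm => ?_
        rw [Finset.mem_range] at hm
        have hm' : m ≤ i := by omega
        rw [← Finset.Ico_add_one_right_eq_Icc, Finset.sum_Ico_eq_sum_range,
          show i + 1 - m = i - m + 1 by omega]
        calc ∑ d ∈ range (i - m + 1),
              ((p - (m + d)).choose (i - (m + d)) : R) *
                (((p - m).choose (m + d - m) : R) * a m * t ^ (m + d - m)) * u ^ (i - (m + d))
            = a m * ∑ d ∈ range (i - m + 1),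
                ((p - (m + d)).choose (i - (m + d)) : R) * ((p - m).choose d : R) * t ^ d *
                  u ^ (i - (m + d)) := by
              rw [Finset.mul_sum]
              refine Finset.sum_congr rfl fun d _ => ?_
              rw [Nat.add_sub_cancel_left]
              ring
          _ = a m * (((p - m).choose (i - m) : R) * (t + u) ^ (i - m)) := by
              rw [key_sum hm' hip]
          _ = ((p - m).choose (i - m) : R) * a m * (t + u) ^ (i - m) := by ring

lemma etaR_sig (p : ℕ) (hp : 1 ≤ p) (x : Apoly p) :
    etaR p (sig p x) = Polynomial.C (sig p x) := by
  have hC : ∀ y : Apoly p,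
      (IsScalarTower.toAlgHom ℚ (Apoly p) (Polynomial (Apoly p))) y = Polynomial.C y := fun y => by
    simp [IsScalarTower.coe_toAlgHom', Polynomial.algebraMap_eq]
  have main : ∀ k : Fin p,
      ((etaR p).comp (sig p)) (MvPolynomial.X k) =
        ((IsScalarTower.toAlgHom ℚ (Apoly p) (Polynomial (Apoly p))).comp (sig p))
          (MvPolynomial.X k) := by
    intro k
    rw [AlgHom.comp_apply, AlgHom.comp_apply, hC]
    have hi : k.1 + 1 ≤ p := k.2
    have hXk : (MvPolynomial.X k : Apoly p) = av p (k.1 + 1) := by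
      rw [av, if_neg (by omega), dif_pos ⟨by omega, hi⟩]
      exact congrArg MvPolynomial.X (by ext; simp)
    rw [hXk, sig_av p hi, map_sum, map_sum]
    calc ∑ j ∈ range (k.1 + 1 + 1),
            etaR p (((p - j).choose (k.1 + 1 - j) : Apoly p) * av p j * sElt p ^ (k.1 + 1 - j))
        = ∑ j ∈ range (k.1 + 1 + 1), ((p - j).choose (k.1 + 1 - j) : Polynomial (Apoly p)) *
            (∑ m ∈ range (j + 1), ((p - m).choose (j - m) : Polynomial (Apoly p)) *
              Polynomial.C (av p m) * Polynomial.X ^ (j - m)) *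
            (Polynomial.C (sElt p) - Polynomial.X) ^ (k.1 + 1 - j) := by
          refine Finset.sum_congr rfl fun j hj => ?_
          rw [Finset.mem_range] at hj
          rw [map_mul, map_mul, map_pow, map_natCast, etaR_av p (by omega), etaR_sElt p hp]
      _ = ∑ m ∈ range (k.1 + 1 + 1), ((p - m).choose (k.1 + 1 - m) : Polynomial (Apoly p)) *
            Polynomial.C (av p m) *
            (Polynomial.X + (Polynomial.C (sElt p) - Polynomial.X)) ^ (k.1 + 1 - m) :=
          double_sum p (k.1 + 1) hi _ _ _
      _ = ∑ m ∈ range (k.1 + 1 + 1),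
            Polynomial.C (((p - m).choose (k.1 + 1 - m) : Apoly p) * av p m *
              sElt p ^ (k.1 + 1 - m)) := by
          refine Finset.sum_congr rfl fun m hm => ?_
          rw [show Polynomial.X + (Polynomial.C (sElt p) - Polynomial.X) = Polynomial.C (sElt p)
            by ring, map_mul, map_mul, map_pow, map_natCast]
  have h := MvPolynomial.algHom_ext main
  have h2 := DFunLike.congr_fun h x
  rw [AlgHom.comp_apply, AlgHom.comp_apply, hC] at h2
  exact h2

lemma scalar_cancel (p : ℕ) (hpq : (p : ℚ) ≠ 0) (i : ℕ) :
    ((-1 : Apoly p)) ^ i * ((p : Apoly p)) ^ i *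
      MvPolynomial.C (((-1 : ℚ) ^ i * (p : ℚ) ^ i)⁻¹) = 1 := by
  have hne : ((-1 : ℚ) ^ i * (p : ℚ) ^ i) ≠ 0 :=
    mul_ne_zero (pow_ne_zero _ (by norm_num)) (pow_ne_zero _ hpq)
  have h1 : ((-1 : Apoly p)) = MvPolynomial.C (-1 : ℚ) := by simp
  have h2 : ((p : Apoly p)) = MvPolynomial.C ((p : ℚ)) := (map_natCast MvPolynomial.C p).symm
  rw [h1, h2, ← map_pow, ← map_pow, ← map_mul, ← map_mul, mul_inv_cancel₀ hne, map_one]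

lemma cgen_eq (p : ℕ) (hpq : (p : ℚ) ≠ 0) {i : ℕ} (hip : i ≤ p) :
    cgen p i = (-1 : Apoly p) ^ i * ((p : Apoly p)) ^ i * sig p (av p i) := by
  rw [cgen, sig_av p hip, Finset.mul_sum]
  refine Finset.sum_congr rfl fun j hj => ?_
  rw [Finset.mem_range] at hj
  obtain ⟨d, rfl⟩ : ∃ d, i = j + d := ⟨i - j, by omega⟩
  rw [Nat.add_sub_cancel_left]
  have h3 : ((-1 : ℚ)) ^ d * ((-1 : ℚ)) ^ d = 1 := by rw [← mul_pow]; norm_num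
  have h2q : ((p : ℚ)) ^ d * ((p : ℚ)⁻¹) ^ d = 1 := by
    rw [← mul_pow, mul_inv_cancel₀ hpq, one_pow]
  have qident : ((-1 : ℚ)) ^ (j + d) * (p : ℚ) ^ (j + d) * (-(p : ℚ)⁻¹) ^ d
      = (-1 : ℚ) ^ j * (p : ℚ) ^ j := by
    rw [neg_pow, pow_add, pow_add]
    linear_combination ((-1 : ℚ) ^ j * (p : ℚ) ^ j * ((-1 : ℚ) ^ d * (-1 : ℚ) ^ d)) * h2q +
      ((-1 : ℚ) ^ j * (p : ℚ) ^ j) * h3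
  have sA : ((-1 : Apoly p)) ^ (j + d) * ((p : Apoly p)) ^ (j + d) *
      (MvPolynomial.C (-(p : ℚ)⁻¹)) ^ d = ((-1 : Apoly p)) ^ j * ((p : Apoly p)) ^ j := by
    have h1 : ((-1 : Apoly p)) = MvPolynomial.C (-1 : ℚ) := by simp
    have h2 : ((p : Apoly p)) = MvPolynomial.C ((p : ℚ)) := (map_natCast MvPolynomial.C p).symm
    simp only [h1, h2, ← map_pow, ← map_mul]
    exact congrArg _ qident
  rw [sElt, mul_pow]
  linear_combination (-(((p - j).choose d : Apoly p) * av p j * (av p 1) ^ d)) * sA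

lemma etaR_cgen (p : ℕ) (hp : 1 ≤ p) (hpq : (p : ℚ) ≠ 0) {i : ℕ} (hip : i ≤ p) :
    etaR p (cgen p i) = Polynomial.C (cgen p i) := by
  rw [cgen_eq p hpq hip, map_mul, map_mul, map_pow, map_pow, map_neg, map_one, map_natCast,
    etaR_sig p hp]
  rw [map_mul, map_mul, map_pow, map_pow, map_neg, map_one, map_natCast]

lemma sig_cgen (p : ℕ) (hp : 1 ≤ p) (hpq : (p : ℚ) ≠ 0) {i : ℕ} (hip : i ≤ p) :
    sig p (cgen p i) = cgen p i := by
  rw [sig, AlgHom.comp_apply, AlgHom.restrictScalars_apply, etaR_cgen p hp hpq hip,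
    Polynomial.aeval_C]
  simp

lemma sig_av1 (p : ℕ) (hp : 1 ≤ p) (hpq : (p : ℚ) ≠ 0) : sig p (av p 1) = 0 := by
  rw [sig, AlgHom.comp_apply, AlgHom.restrictScalars_apply]
  have h1 : etaR p (av p 1) = (p : Polynomial (Apoly p)) * Polynomial.X + Polynomial.C (av p 1) := by
    rw [etaR_av p hp, Finset.sum_range_succ, Finset.sum_range_one]
    simp [av, Nat.choose_one_right]
  rw [h1, map_add, map_mul, Polynomial.aeval_X, Polynomial.aeval_C, map_natCast]
  simp only [Algebra.algebraMap_self, RingHom.id_apply]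
  rw [sElt]
  have key : (p : Apoly p) * (MvPolynomial.C (-(p : ℚ)⁻¹)) = -1 := by
    have h2 : ((p : Apoly p)) = MvPolynomial.C ((p : ℚ)) := (map_natCast MvPolynomial.C p).symm
    rw [h2, ← map_mul, show (p : ℚ) * (-(p : ℚ)⁻¹) = -1 by field_simp]
    simp
  linear_combination (av p 1) * key

/-- The variable-rescaling/killing substitution used to prove algebraic independence. -/
noncomputable def gfun (p : ℕ) : Fin p → Apoly p := fun k =>
  if k.1 = 0 then 0
  else MvPolynomial.C (((-1 : ℚ) ^ (k.1 + 1) * (p : ℚ) ^ (k.1 + 1))⁻¹) * MvPolynomial.X k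

lemma aeval_gfun_cgen (p : ℕ) (hpq : (p : ℚ) ≠ 0) {i : ℕ} (h2 : 2 ≤ i) (hip : i ≤ p) :
    (MvPolynomial.aeval (gfun p)) (cgen p i) = MvPolynomial.X (⟨i - 1, by omega⟩ : Fin p) := by
  have hav1 : (MvPolynomial.aeval (gfun p)) (av p 1) = 0 := by
    rw [av, if_neg one_ne_zero, dif_pos ⟨le_refl 1, by omega⟩, MvPolynomial.aeval_X]
    simp [gfun]
  rw [cgen, map_sum, Finset.sum_range_succ]
  have hzero : ∀ j ∈ range i,
      (MvPolynomial.aeval (gfun p)) (((p - j).choose (i - j) : Apoly p) * (-1 : Apoly p) ^ j *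
        av p j * (av p 1) ^ (i - j) * (p : Apoly p) ^ j) = 0 := by
    intro j hj
    rw [Finset.mem_range] at hj
    simp only [map_mul, map_pow, hav1]
    rw [zero_pow (by omega : i - j ≠ 0)]
    ring
  rw [Finset.sum_eq_zero hzero, zero_add]
  have havi : (MvPolynomial.aeval (gfun p)) (av p i)
      = MvPolynomial.C (((-1 : ℚ) ^ i * (p : ℚ) ^ i)⁻¹) *
          MvPolynomial.X (⟨i - 1, by omega⟩ : Fin p) := by
    rw [av, if_neg (by omega), dif_pos ⟨by omega, hip⟩, MvPolynomial.aeval_X, gfun]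
    rw [if_neg (by simp; omega)]
    rw [show (⟨i - 1, by omega⟩ : Fin p).1 + 1 = i by simp; omega]
  rw [Nat.sub_self, Nat.choose_zero_right, pow_zero]
  simp only [map_mul, map_pow, map_natCast, map_one, map_neg, havi, Nat.cast_one]
  linear_combination (MvPolynomial.X (⟨i - 1, by omega⟩ : Fin p)) * scalar_cancel p hpq i

/-- The elements `c_2, …, c_p` are algebraically independent over ℚ; hence the ring of
invariants is a polynomial ℚ-algebra on the `p - 1` generators `c_2, …, c_p`. -/
theorem c_algebraicallyIndependent_and_invariants_polynomial (p : ℕ) (hp : p.Prime) :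
    AlgebraicIndependent ℚ (fun i : Fin (p - 1) => cgen p (i.1 + 2)) ∧
    {g : Apoly p | etaR p g = Polynomial.C g} =
      ↑(Algebra.adjoin ℚ (Set.range (fun i : Fin (p - 1) => cgen p (i.1 + 2)))) ∧
    Nonempty
      ((Algebra.adjoin ℚ (Set.range (fun i : Fin (p - 1) => cgen p (i.1 + 2)))) ≃ₐ[ℚ]
        MvPolynomial (Fin (p - 1)) ℚ) := by
  have hp2 : 2 ≤ p := hp.two_le
  have hp1 : 1 ≤ p := by omega
  have hpq : (p : ℚ) ≠ 0 := Nat.cast_ne_zero.mpr (by omega)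
  set cf : Fin (p - 1) → Apoly p := fun i => cgen p (i.1 + 2) with hcf
  -- Part 1: algebraic independence
  have hind : AlgebraicIndependent ℚ cf := by
    have hXind : AlgebraicIndependent ℚ
        (fun i : Fin (p - 1) => (MvPolynomial.X (⟨i.1 + 1, by omega⟩ : Fin p) : Apoly p)) := by
      have := (MvPolynomial.algebraicIndependent_X (Fin p) ℚ).comp
        (fun i : Fin (p - 1) => (⟨i.1 + 1, by omega⟩ : Fin p))
        (fun a b hab => by
          have := congrArg Fin.val hab
          simp only at this
          exact Fin.ext (by omega))
      exact this
    refine AlgebraicIndependent.of_comp (MvPolynomial.aeval (gfun p)) ?_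
    have hcomp : (⇑(MvPolynomial.aeval (gfun p)) ∘ cf)
        = fun i : Fin (p - 1) => (MvPolynomial.X (⟨i.1 + 1, by omega⟩ : Fin p) : Apoly p) := by
      funext i
      have hi2 : 2 ≤ i.1 + 2 := by omega
      have hip : i.1 + 2 ≤ p := by omega
      rw [Function.comp_apply, hcf, aeval_gfun_cgen p hpq hi2 hip]
      exact congrArg MvPolynomial.X (by ext; simp)
    rw [hcomp]
    exact hXind
  refine ⟨hind, ?_, ⟨hind.aevalEquiv.symm⟩⟩
  -- Part 2: the invariants are exactly the adjoin
  have claim : ∀ x : Apoly p, sig p x ∈ Algebra.adjoin ℚ (Set.range cf) := by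
    intro x
    have hx : x ∈ Algebra.adjoin ℚ (Set.range (MvPolynomial.X : Fin p → Apoly p)) := by
      rw [MvPolynomial.adjoin_range_X]; exact Algebra.mem_top
    refine Algebra.adjoin_induction (fun y hy => ?_) (fun r => ?_)
      (fun a b _ _ ha hb => by rw [map_add]; exact add_mem ha hb)
      (fun a b _ _ ha hb => by rw [map_mul]; exact mul_mem ha hb) hx
    · obtain ⟨k, rfl⟩ := hy
      rcases k with ⟨kv, hk⟩
      match kv, hk with
      | 0, hk =>
        have h0 : (MvPolynomial.X (⟨0, hk⟩ : Fin p) : Apoly p) = av p 1 := by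
          rw [av, if_neg one_ne_zero, dif_pos ⟨le_refl 1, by omega⟩]
        rw [h0, sig_av1 p hp1 hpq]
        exact zero_mem _
      | m + 1, hk =>
        have h0 : (MvPolynomial.X (⟨m + 1, hk⟩ : Fin p) : Apoly p) = av p (m + 2) := by
          rw [av, if_neg (by omega), dif_pos ⟨by omega, by omega⟩]
          exact congrArg MvPolynomial.X (by ext; simp)
        have hIp : m + 2 ≤ p := by omega
        have hsig : sig p (av p (m + 2))
            = MvPolynomial.C (((-1 : ℚ) ^ (m + 2) * (p : ℚ) ^ (m + 2))⁻¹) * cgen p (m + 2) := by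
          rw [cgen_eq p hpq hIp]
          linear_combination (-(sig p (av p (m + 2)))) * scalar_cancel p hpq (m + 2)
        rw [h0, hsig]
        have hmem : cgen p (m + 2) ∈ Algebra.adjoin ℚ (Set.range cf) :=
          Algebra.subset_adjoin ⟨⟨m, by omega⟩, rfl⟩
        rw [← MvPolynomial.smul_eq_C_mul]
        exact Subalgebra.smul_mem _ hmem _
    · rw [AlgHom.commutes]
      exact Subalgebra.algebraMap_mem _ r
  ext g0
  simp only [Set.mem_setOf_eq, SetLike.mem_coe]
  constructor
  · intro hg
    have hfix : sig p g0 = g0 := by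
      rw [sig, AlgHom.comp_apply, AlgHom.restrictScalars_apply, hg, Polynomial.aeval_C]
      simp
    rw [← hfix]
    exact claim g0
  · intro hg
    refine Algebra.adjoin_induction (fun y hy => ?_) (fun r => ?_)
      (fun a b _ _ ha hb => by rw [map_add, map_add, ha, hb])
      (fun a b _ _ ha hb => by rw [map_mul, map_mul, ha, hb]) hg
    · obtain ⟨k, rfl⟩ := hy
      exact etaR_cgen p hp1 hpq (by omega : k.1 + 2 ≤ p)
    · rw [AlgHom.commutes, Polynomial.algebraMap_apply]
end

section
/- Each of the four elements c_2, c_3, c_4, c_5 of A is invariant: η_R(c_i) = c_i in Γ for i = 2, 3, 4, 5. -/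
/-!
`Z5 = ℤ_{(5)}` is the localization of `ℤ` at the prime `(5)`, `A5 = ℤ_{(5)}[a_1,…,a_5]`
(the variable `⟨i-1⟩ : Fin 5` is `a_i`), and `etaR5 : A5 → A5[r]` is the right unit of the
Gorbounov–Hopkins–Mahowald Hopf algebroid at `p = 5`, determined by
`η_R(a_i) = ∑_{j=0}^{i} C(5-j, i-j)·a_j·r^{i-j}` with `a_0 = 1` (equivalently, the
`η_R(a_i)` are the coefficients of `f(x+r)` for `f(x) = x^5 + a_1 x^4 + ⋯ + a_5`).
-/

instance span5_isPrime : (Ideal.span {(5 : ℤ)}).IsPrime := by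
  rw [Ideal.span_singleton_prime (by norm_num)]
  exact Int.prime_iff_natAbs_prime.mpr (by norm_num)

/-- The localization `ℤ_{(5)}` of `ℤ` at the prime ideal `(5)`. -/
abbrev Z5 : Type := Localization.AtPrime (Ideal.span {(5 : ℤ)})

/-- The polynomial ring `A = ℤ_{(5)}[a_1,…,a_5]`. -/
abbrev A5 : Type := MvPolynomial (Fin 5) Z5

/-- `av5 j` is the generator `a_j`, with the convention `a_0 = 1`. -/
noncomputable def av5 (j : ℕ) : A5 :=
  if j = 0 then 1 else if h : 1 ≤ j ∧ j ≤ 5 then MvPolynomial.X ⟨j - 1, by omega⟩ else 0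

/-- The right unit `η_R : A → Γ = A[r]`. -/
noncomputable def etaR5 : A5 →ₐ[Z5] Polynomial A5 :=
  MvPolynomial.aeval (fun k : Fin 5 =>
    ∑ j ∈ Finset.range (k.1 + 2),
      (Nat.choose (5 - j) (k.1 + 1 - j) : Polynomial A5) *
        Polynomial.C (av5 j) * Polynomial.X ^ (k.1 + 1 - j))

/-- The generators `a_1, …, a_5` of `A`. -/
noncomputable def a1 : A5 := MvPolynomial.X 0
noncomputable def a2 : A5 := MvPolynomial.X 1
noncomputable def a3 : A5 := MvPolynomial.X 2
noncomputable def a4 : A5 := MvPolynomial.X 3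
noncomputable def a5 : A5 := MvPolynomial.X 4

/-- `c_2 = −2a_1² + 5a_2`. -/
noncomputable def c2 : A5 := -2 * a1 ^ 2 + 5 * a2
/-- `c_3 = 4a_1³ − 15a_1a_2 + 25a_3`. -/
noncomputable def c3 : A5 := 4 * a1 ^ 3 - 15 * a1 * a2 + 25 * a3
/-- `c_4 = −3a_1⁴ + 15a_1²a_2 − 50a_1a_3 + 125a_4`. -/
noncomputable def c4 : A5 := -3 * a1 ^ 4 + 15 * a1 ^ 2 * a2 - 50 * a1 * a3 + 125 * a4
/-- `c_5 = 4a_1⁵ − 25a_1³a_2 + 125a_1²a_3 − 625a_1a_4 + 3125a_5`. -/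
noncomputable def c5 : A5 :=
  4 * a1 ^ 5 - 25 * a1 ^ 3 * a2 + 125 * a1 ^ 2 * a3 - 625 * a1 * a4 + 3125 * a5


open Polynomial in
lemma ha1 : etaR5 a1 = Polynomial.C a1 + 5 * X := by
  simp [etaR5, a1, av5, Finset.sum_range_succ, show ((0:Fin 5):ℕ)=0 from rfl, show ((1:Fin 5):ℕ)=1 from rfl, show ((2:Fin 5):ℕ)=2 from rfl, show ((3:Fin 5):ℕ)=3 from rfl, show ((4:Fin 5):ℕ)=4 from rfl]; norm_num [Nat.choose] <;> ring

open Polynomial in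
lemma ha2 : etaR5 a2 = Polynomial.C a2 + 4 * Polynomial.C a1 * X + 10 * X ^ 2 := by
  simp [etaR5, a1, a2, av5, Finset.sum_range_succ, show ((0:Fin 5):ℕ)=0 from rfl, show ((1:Fin 5):ℕ)=1 from rfl, show ((2:Fin 5):ℕ)=2 from rfl, show ((3:Fin 5):ℕ)=3 from rfl, show ((4:Fin 5):ℕ)=4 from rfl]; norm_num [Nat.choose] <;> ring

open Polynomial in
lemma ha3 : etaR5 a3 = Polynomial.C a3 + 3 * Polynomial.C a2 * X
    + 6 * Polynomial.C a1 * X ^ 2 + 10 * X ^ 3 := by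
  simp [etaR5, a1, a2, a3, av5, Finset.sum_range_succ, show ((0:Fin 5):ℕ)=0 from rfl, show ((1:Fin 5):ℕ)=1 from rfl, show ((2:Fin 5):ℕ)=2 from rfl, show ((3:Fin 5):ℕ)=3 from rfl, show ((4:Fin 5):ℕ)=4 from rfl]; norm_num [Nat.choose] <;> ring

open Polynomial in
lemma ha4 : etaR5 a4 = Polynomial.C a4 + 2 * Polynomial.C a3 * X
    + 3 * Polynomial.C a2 * X ^ 2 + 4 * Polynomial.C a1 * X ^ 3 + 5 * X ^ 4 := by
  simp [etaR5, a1, a2, a3, a4, av5, Finset.sum_range_succ, show ((0:Fin 5):ℕ)=0 from rfl, show ((1:Fin 5):ℕ)=1 from rfl, show ((2:Fin 5):ℕ)=2 from rfl, show ((3:Fin 5):ℕ)=3 from rfl, show ((4:Fin 5):ℕ)=4 from rfl]; norm_num [Nat.choose] <;> ring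

open Polynomial in
lemma ha5 : etaR5 a5 = Polynomial.C a5 + Polynomial.C a4 * X
    + Polynomial.C a3 * X ^ 2 + Polynomial.C a2 * X ^ 3 + Polynomial.C a1 * X ^ 4 + X ^ 5 := by
  simp [etaR5, a1, a2, a3, a4, a5, av5, Finset.sum_range_succ, show ((0:Fin 5):ℕ)=0 from rfl, show ((1:Fin 5):ℕ)=1 from rfl, show ((2:Fin 5):ℕ)=2 from rfl, show ((3:Fin 5):ℕ)=3 from rfl, show ((4:Fin 5):ℕ)=4 from rfl]; norm_num [Nat.choose] <;> ring

/-- Each of `c_2, c_3, c_4, c_5` is invariant: `η_R(c_i) = c_i`. -/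
theorem c_invariant :
    etaR5 c2 = Polynomial.C c2 ∧ etaR5 c3 = Polynomial.C c3 ∧
    etaR5 c4 = Polynomial.C c4 ∧ etaR5 c5 = Polynomial.C c5 := by
  refine ⟨?_, ?_, ?_, ?_⟩ <;>
    simp only [c2, c3, c4, c5, map_add, map_sub, map_mul, map_pow, map_neg, map_ofNat,
      ha1, ha2, ha3, ha4, ha5] <;>
    ring
end

section
/- Let ρ : A → 𝔽_5[a_2,a_3,a_4] be the ring homomorphism reducing ℤ_{(5)} modulo 5 and sending a_1 ↦ 0, a_5 ↦ 0, and a_i ↦ a_i for i = 2,3,4. Then ρ(Δ) = a_4^5 − 2a_3^4a_4^2 − a_2a_3^2a_4^3 + 2a_2^2a_4^4 + a_2^3a_3^2a_4^2 + a_2^4a_4^3. -/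
set_option maxHeartbeats 1600000


/-- The polynomial `5^{15}·Δ` expressed in the `c_i`. -/
noncomputable def discRHS : A5 :=
  -100 * c2 ^ 3 * c3 ^ 2 * c4 ^ 2 - 135 * c3 ^ 4 * c4 ^ 2 + 400 * c2 ^ 4 * c4 ^ 3
    + 720 * c2 * c3 ^ 2 * c4 ^ 3 - 640 * c2 ^ 2 * c4 ^ 4 + 256 * c4 ^ 5
    + 80 * c2 ^ 3 * c3 ^ 3 * c5 + 108 * c3 ^ 5 * c5 - 360 * c2 ^ 4 * c3 * c4 * c5
    - 630 * c2 * c3 ^ 3 * c4 * c5 + 560 * c2 ^ 2 * c3 * c4 ^ 2 * c5 - 320 * c3 * c4 ^ 3 * c5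
    + 108 * c2 ^ 5 * c5 ^ 2 + 165 * c2 ^ 2 * c3 ^ 2 * c5 ^ 2 - 180 * c2 ^ 3 * c4 * c5 ^ 2
    + 90 * c3 ^ 2 * c4 * c5 ^ 2 + 80 * c2 * c4 ^ 2 * c5 ^ 2 - 30 * c2 * c3 * c5 ^ 3 + c5 ^ 4

instance : Fact (Nat.Prime 5) := ⟨by norm_num⟩

lemma castRingHom_isUnit :
    ∀ y : (Ideal.span {(5 : ℤ)}).primeCompl, IsUnit (Int.castRingHom (ZMod 5) y) := by
  intro y
  have h : ((y : ℤ) : ZMod 5) ≠ 0 := by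
    intro h0
    exact y.2 (Ideal.mem_span_singleton.mpr
      ((ZMod.intCast_zmod_eq_zero_iff_dvd _ 5).mp h0))
  simpa [Int.coe_castRingHom] using h.isUnit

/-- The residue map `ℤ_{(5)} → 𝔽_5`, reduction modulo `5`. -/
noncomputable def resMap : Z5 →+* ZMod 5 := IsLocalization.lift castRingHom_isUnit

/-- The reduction `ρ : A → 𝔽_5[a_2,a_3,a_4]`, reducing `ℤ_{(5)}` modulo `5` and sending
`a_1 ↦ 0`, `a_5 ↦ 0`, and `a_i ↦ a_i` for `i = 2,3,4` (the variable `j : Fin 3` in the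
target is `a_{j+2}`). -/
noncomputable def rho : A5 →+* MvPolynomial (Fin 3) (ZMod 5) :=
  MvPolynomial.eval₂Hom ((MvPolynomial.C : ZMod 5 →+* MvPolynomial (Fin 3) (ZMod 5)).comp resMap)
    (fun i : Fin 5 =>
      if i = 1 then MvPolynomial.X 0
      else if i = 2 then MvPolynomial.X 1
      else if i = 3 then MvPolynomial.X 2
      else 0)

noncomputable def Pp : A5 :=
  ((-2500) : A5) * MvPolynomial.X (3 : Fin 5) * MvPolynomial.X (4 : Fin 5) ^ 3 + ((-192) : A5) * MvPolynomial.X (2 : Fin 5) * MvPolynomial.X (3 : Fin 5) ^ 4 + (1020 : A5) * MvPolynomial.X (2 : Fin 5) ^ 2 * MvPolynomial.X (3 : Fin 5) ^ 2 * MvPolynomial.X (4 : Fin 5) + ((-900) : A5) * MvPolynomial.X (2 : Fin 5) ^ 3 * MvPolynomial.X (4 : Fin 5) ^ 2 + (160 : A5) * MvPolynomial.X (1 : Fin 5) * MvPolynomial.X (3 : Fin 5) ^ 3 * MvPolynomial.X (4 : Fin 5) + ((-2050) : A5) * MvPolynomial.X (1 : Fin 5) * MvPolynomial.X (2 : Fin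 5) * MvPolynomial.X (3 : Fin 5) * MvPolynomial.X (4 : Fin 5) ^ 2 + (18 : A5) * MvPolynomial.X (1 : Fin 5) * MvPolynomial.X (2 : Fin 5) ^ 3 * MvPolynomial.X (3 : Fin 5) ^ 2 + ((-72) : A5) * MvPolynomial.X (1 : Fin 5) * MvPolynomial.X (2 : Fin 5) ^ 4 * MvPolynomial.X (4 : Fin 5) + (2250 : A5) * MvPolynomial.X (1 : Fin 5) ^ 2 * MvPolynomial.X (4 : Fin 5) ^ 3 + ((-80) : A5) * MvPolynomial.X (1 : Fin 5) ^ 2 * MvPolynomial.X (2 : Fin 5) * MvPolynomial.X (3 : Fin 5) ^ 3 + (356 : A5) * MvPolynomial.X (1 : Fin 5) ^ 2 * MvPolynomial.X (2 : Fin 5) ^ 2 * MvPolynomial.X (3 : Fin 5) * MvPolynomial.X (4 : Fin 5) + (24 : A5) * MvPolynomial.X (1 : Fin 5) ^ 3 * MvPolynomial.X (3 : Fin 5) ^ 2 * MvPolynomial.X (4 : Fin 5) + ((-630) : A5) * MvPolynomial.X (1 : Fin 5) ^ 3 * MvPolynomial.X (2 : Fin 5) * MvPolynomial.X (4 : Fin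 5) ^ 2 + ((-50) : A5) * MvPolynomial.X (0 : Fin 5) * MvPolynomial.X (3 : Fin 5) ^ 2 * MvPolynomial.X (4 : Fin 5) ^ 2 + (2000 : A5) * MvPolynomial.X (0 : Fin 5) * MvPolynomial.X (2 : Fin 5) * MvPolynomial.X (4 : Fin 5) ^ 3 + ((-6) : A5) * MvPolynomial.X (0 : Fin 5) * MvPolynomial.X (2 : Fin 5) ^ 2 * MvPolynomial.X (3 : Fin 5) ^ 3 + (24 : A5) * MvPolynomial.X (0 : Fin 5) * MvPolynomial.X (2 : Fin 5) ^ 3 * MvPolynomial.X (3 : Fin 5) * MvPolynomial.X (4 : Fin 5) + (144 : A5) * MvPolynomial.X (0 : Fin 5) * MvPolynomial.X (1 : Fin 5) * MvPolynomial.X (3 : Fin 5) ^ 4 + ((-746) : A5) * MvPolynomial.X (0 : Fin 5) * MvPolynomial.X (1 : Fin 5) * MvPolynomial.X (2 : Fin 5) * MvPolynomial.X (3 : Fin 5) ^ 2 * MvPolynomial.X (4 : Fin 5) + (560 : A5) * MvPolynomial.X (0 : Fin 5) * MvPolynomial.X (1 : Fin 5) * MvPolynomial.X (2 : Fin 5)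 ^ 2 * MvPolynomial.X (4 : Fin 5) ^ 2 + (1020 : A5) * MvPolynomial.X (0 : Fin 5) * MvPolynomial.X (1 : Fin 5) ^ 2 * MvPolynomial.X (3 : Fin 5) * MvPolynomial.X (4 : Fin 5) ^ 2 + MvPolynomial.X (0 : Fin 5) * MvPolynomial.X (1 : Fin 5) ^ 2 * MvPolynomial.X (2 : Fin 5) ^ 2 * MvPolynomial.X (3 : Fin 5) ^ 2 + ((-4) : A5) * MvPolynomial.X (0 : Fin 5) * MvPolynomial.X (1 : Fin 5) ^ 2 * MvPolynomial.X (2 : Fin 5) ^ 3 * MvPolynomial.X (4 : Fin 5) + ((-4) : A5) * MvPolynomial.X (0 : Fin 5) * MvPolynomial.X (1 : Fin 5) ^ 3 * MvPolynomial.X (3 : Fin 5) ^ 3 + (18 : A5) * MvPolynomial.X (0 : Fin 5) * MvPolynomial.X (1 : Fin 5) ^ 3 * MvPolynomial.X (2 : Fin 5) * MvPolynomial.X (3 : Fin 5) * MvPolynomial.X (4 : Fin 5) + ((-27) : A5) * MvPolynomial.X (0 : Fin 5) * MvPolynomial.X (1 : Fin 5) ^ 4 * MvPolynomial.X (4 :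 Fin 5) ^ 2 + ((-36) : A5) * MvPolynomial.X (0 : Fin 5) ^ 2 * MvPolynomial.X (3 : Fin 5) ^ 3 * MvPolynomial.X (4 : Fin 5) + (160 : A5) * MvPolynomial.X (0 : Fin 5) ^ 2 * MvPolynomial.X (2 : Fin 5) * MvPolynomial.X (3 : Fin 5) * MvPolynomial.X (4 : Fin 5) ^ 2 + ((-4) : A5) * MvPolynomial.X (0 : Fin 5) ^ 2 * MvPolynomial.X (2 : Fin 5) ^ 3 * MvPolynomial.X (3 : Fin 5) ^ 2 + (16 : A5) * MvPolynomial.X (0 : Fin 5) ^ 2 * MvPolynomial.X (2 : Fin 5) ^ 4 * MvPolynomial.X (4 : Fin 5) + ((-1600) : A5) * MvPolynomial.X (0 : Fin 5) ^ 2 * MvPolynomial.X (1 : Fin 5) * MvPolynomial.X (4 : Fin 5) ^ 3 + (18 : A5) * MvPolynomial.X (0 : Fin 5) ^ 2 * MvPolynomial.X (1 : Fin 5) * MvPolynomial.X (2 : Fin 5) * MvPolynomial.X (3 : Fin 5) ^ 3 + ((-80) : A5) * MvPolynomial.X (0 : Fin 5) ^ 2 * MvPolynomial.X (1 : Fin 5)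 * MvPolynomial.X (2 : Fin 5) ^ 2 * MvPolynomial.X (3 : Fin 5) * MvPolynomial.X (4 : Fin 5) + ((-6) : A5) * MvPolynomial.X (0 : Fin 5) ^ 2 * MvPolynomial.X (1 : Fin 5) ^ 2 * MvPolynomial.X (3 : Fin 5) ^ 2 * MvPolynomial.X (4 : Fin 5) + (144 : A5) * MvPolynomial.X (0 : Fin 5) ^ 2 * MvPolynomial.X (1 : Fin 5) ^ 2 * MvPolynomial.X (2 : Fin 5) * MvPolynomial.X (4 : Fin 5) ^ 2 + ((-27) : A5) * MvPolynomial.X (0 : Fin 5) ^ 3 * MvPolynomial.X (3 : Fin 5) ^ 4 + (144 : A5) * MvPolynomial.X (0 : Fin 5) ^ 3 * MvPolynomial.X (2 : Fin 5) * MvPolynomial.X (3 : Fin 5) ^ 2 * MvPolynomial.X (4 : Fin 5) + ((-128) : A5) * MvPolynomial.X (0 : Fin 5) ^ 3 * MvPolynomial.X (2 : Fin 5) ^ 2 * MvPolynomial.X (4 : Fin 5) ^ 2 + ((-192) : A5) * MvPolynomial.X (0 : Fin 5) ^ 3 * MvPolynomial.X (1 : Fin 5) * MvPolynomial.X (3 :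 Fin 5) * MvPolynomial.X (4 : Fin 5) ^ 2 + (256 : A5) * MvPolynomial.X (0 : Fin 5) ^ 4 * MvPolynomial.X (4 : Fin 5) ^ 3

noncomputable def Qp : A5 :=
  (3125 : A5) * MvPolynomial.X (4 : Fin 5) ^ 3 + ((-1600) : A5) * MvPolynomial.X (2 : Fin 5) * MvPolynomial.X (3 : Fin 5) ^ 3 + (2250 : A5) * MvPolynomial.X (2 : Fin 5) ^ 2 * MvPolynomial.X (3 : Fin 5) * MvPolynomial.X (4 : Fin 5) + (108 : A5) * MvPolynomial.X (2 : Fin 5) ^ 5 + (2000 : A5) * MvPolynomial.X (1 : Fin 5) * MvPolynomial.X (3 : Fin 5) ^ 2 * MvPolynomial.X (4 : Fin 5) + ((-3750) : A5) * MvPolynomial.X (1 : Fin 5) * MvPolynomial.X (2 : Fin 5) * MvPolynomial.X (4 : Fin 5) ^ 2 + ((-630) : A5) * MvPolynomial.X (1 : Fin 5) * MvPolynomial.X (2 : Fin 5) ^ 3 * MvPolynomial.X (3 : Fin 5) + (560 : A5) * MvPolynomial.X (1 : Fin 5) ^ 2 * MvPolynomial.X (2 : Fin 5) * MvPolynomial.X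 (3 : Fin 5) ^ 2 + (825 : A5) * MvPolynomial.X (1 : Fin 5) ^ 2 * MvPolynomial.X (2 : Fin 5) ^ 2 * MvPolynomial.X (4 : Fin 5) + ((-900) : A5) * MvPolynomial.X (1 : Fin 5) ^ 3 * MvPolynomial.X (3 : Fin 5) * MvPolynomial.X (4 : Fin 5) + (16 : A5) * MvPolynomial.X (1 : Fin 5) ^ 3 * MvPolynomial.X (2 : Fin 5) ^ 3 + ((-72) : A5) * MvPolynomial.X (1 : Fin 5) ^ 4 * MvPolynomial.X (2 : Fin 5) * MvPolynomial.X (3 : Fin 5) + (108 : A5) * MvPolynomial.X (1 : Fin 5) ^ 5 * MvPolynomial.X (4 : Fin 5)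

noncomputable def Rp : A5 :=
  MvPolynomial.X (3 : Fin 5) ^ 5 + ((-2) : A5) * MvPolynomial.X (2 : Fin 5) ^ 4 * MvPolynomial.X (3 : Fin 5) ^ 2 + ((-1) : A5) * MvPolynomial.X (1 : Fin 5) * MvPolynomial.X (2 : Fin 5) ^ 2 * MvPolynomial.X (3 : Fin 5) ^ 3 + (2 : A5) * MvPolynomial.X (1 : Fin 5) ^ 2 * MvPolynomial.X (3 : Fin 5) ^ 4 + MvPolynomial.X (1 : Fin 5) ^ 3 * MvPolynomial.X (2 : Fin 5) ^ 2 * MvPolynomial.X (3 : Fin 5) ^ 2 + MvPolynomial.X (1 : Fin 5) ^ 4 * MvPolynomial.X (3 : Fin 5) ^ 3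

noncomputable def Sp : A5 :=
  (51 : A5) * MvPolynomial.X (3 : Fin 5) ^ 5 + ((-5) : A5) * MvPolynomial.X (2 : Fin 5) ^ 4 * MvPolynomial.X (3 : Fin 5) ^ 2 + (29 : A5) * MvPolynomial.X (1 : Fin 5) * MvPolynomial.X (2 : Fin 5) ^ 2 * MvPolynomial.X (3 : Fin 5) ^ 3 + ((-26) : A5) * MvPolynomial.X (1 : Fin 5) ^ 2 * MvPolynomial.X (3 : Fin 5) ^ 4 + ((-1) : A5) * MvPolynomial.X (1 : Fin 5) ^ 3 * MvPolynomial.X (2 : Fin 5) ^ 2 * MvPolynomial.X (3 : Fin 5) ^ 2 + (3 : A5) * MvPolynomial.X (1 : Fin 5) ^ 4 * MvPolynomial.X (3 : Fin 5) ^ 3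



lemma five_ne_zero_Z5 : (5 : Z5) ≠ 0 := by
  have hinj : Function.Injective (algebraMap ℤ Z5) :=
    IsLocalization.injective (M := (Ideal.span {(5:ℤ)}).primeCompl) Z5 (by
      intro x hx
      have hx' : x ∉ Ideal.span {(5:ℤ)} := hx
      exact mem_nonZeroDivisors_of_ne_zero (fun h0 => hx' (h0 ▸ Ideal.zero_mem _)))
  intro h
  have h2 : (algebraMap ℤ Z5) 5 = (algebraMap ℤ Z5) 0 := by
    simp only [map_ofNat, map_zero]; exact h
  exact (by norm_num : (5:ℤ) ≠ 0) (hinj h2)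

lemma five_ne_zero_A5 : (5 : A5) ≠ 0 := by
  have h : (5 : A5) = MvPolynomial.C (5 : Z5) := (map_ofNat MvPolynomial.C 5).symm
  rw [h, Ne, MvPolynomial.C_eq_zero]
  exact five_ne_zero_Z5

lemma key : (5 : A5) ^ 15 *
    (MvPolynomial.X (0 : Fin 5) * Pp + MvPolynomial.X (4 : Fin 5) * Qp + Rp + 5 * Sp)
    = discRHS := by
  unfold Pp Qp Rp Sp discRHS c2 c3 c4 c5 a1 a2 a3 a4 a5
  ring

lemma rho_X0 : rho (MvPolynomial.X (0 : Fin 5)) = 0 := by simp [rho]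
lemma rho_X4 : rho (MvPolynomial.X (4 : Fin 5)) = 0 := by simp [rho]
lemma rho_X1 : rho (MvPolynomial.X (1 : Fin 5)) = MvPolynomial.X 0 := by simp [rho]
lemma rho_X2 : rho (MvPolynomial.X (2 : Fin 5)) = MvPolynomial.X 1 := by simp [rho]
lemma rho_X3 : rho (MvPolynomial.X (3 : Fin 5)) = MvPolynomial.X 2 := by simp [rho]
lemma five_zero_target : (5 : MvPolynomial (Fin 3) (ZMod 5)) = 0 := by
  exact_mod_cast CharP.cast_eq_zero (MvPolynomial (Fin 3) (ZMod 5)) 5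

/-- `ρ(Δ) = a_4^5 − 2a_3^4a_4^2 − a_2a_3^2a_4^3 + 2a_2^2a_4^4 + a_2^3a_3^2a_4^2 + a_2^4a_4^3`,
where `Δ` is the unique element of `A` with `5^{15}·Δ = discRHS`. -/
theorem rho_discriminant (Δ : A5) (hΔ : (5 : A5) ^ 15 * Δ = discRHS) :
    rho Δ =
      (MvPolynomial.X 2) ^ 5 - 2 * (MvPolynomial.X 1) ^ 4 * (MvPolynomial.X 2) ^ 2
        - (MvPolynomial.X 0) * (MvPolynomial.X 1) ^ 2 * (MvPolynomial.X 2) ^ 3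
        + 2 * (MvPolynomial.X 0) ^ 2 * (MvPolynomial.X 2) ^ 4
        + (MvPolynomial.X 0) ^ 3 * (MvPolynomial.X 1) ^ 2 * (MvPolynomial.X 2) ^ 2
        + (MvPolynomial.X 0) ^ 4 * (MvPolynomial.X 2) ^ 3 := by
  have hne : (5 : A5) ^ 15 ≠ 0 := pow_ne_zero _ five_ne_zero_A5
  have hΔ' : Δ = MvPolynomial.X (0 : Fin 5) * Pp + MvPolynomial.X (4 : Fin 5) * Qp + Rp + 5 * Sp :=
    mul_left_cancel₀ hne (hΔ.trans key.symm)
  subst hΔ'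
  unfold Rp
  simp only [map_add, map_mul, map_pow, map_neg, map_one, map_ofNat, rho_X0, rho_X1, rho_X2,
    rho_X3, rho_X4, five_zero_target, zero_mul, mul_zero, add_zero, zero_add]
  ring
end
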